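/- Fix α₀ < α₁ < ⋯ < α_T = 1 in (0, 1]. Suppose a sequence of estimators satisfies ‖θ̂_t − θ*‖ ≤ c (‖θ̂_{t−1} − θ*‖² + r_t) for all t = 1, …, T, where r_t = √(p/K^{α_t}), c ≥ 1 is a constant, and ‖θ̂₀ − θ*‖ ≤ √(p/K^{α₀}). If p K^{α_t} / K^{2α_{t−1}} ≤ 1/(4c²)² for every t, then ‖θ̂_T − θ*‖ ≤ 2c √(p/K). -/
import Mathlib


open Real

/-- The deterministic recursion driving the multi-stage Newton iteration: if each stage
incurs error at most `c(previous error² + √(p/K^{α_t}))` and the exponents grow fast enough,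
the final error is at most `2c√(p/K)`. -/
theorem stmt13 (T : ℕ) (hT : 0 < T) (α : ℕ → ℝ)
    (hαmono : ∀ t < T, α t < α (t + 1))
    (hα0 : 0 < α 0) (hα1 : ∀ t ≤ T, α t ≤ 1) (hαT : α T = 1)
    (p K c : ℝ) (hp : 0 < p) (hK : 1 < K) (hc : 1 ≤ c)
    (e : ℕ → ℝ) (he : ∀ t, 0 ≤ e t)
    (he0 : e 0 ≤ Real.sqrt (p / K ^ (α 0)))
    (hrec : ∀ t, 1 ≤ t → t ≤ T →
      e t ≤ c * ((e (t - 1)) ^ 2 + Real.sqrt (p / K ^ (α t))))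
    (hcond : ∀ t, 1 ≤ t → t ≤ T →
      p * K ^ (α t) / K ^ (2 * α (t - 1)) ≤ (1 / (4 * c ^ 2)) ^ 2) :
    e T ≤ 2 * c * Real.sqrt (p / K) := by
  have hK0 : (0:ℝ) < K := by linarith
  have key : ∀ t, t ≤ T → e t ≤ 2 * c * Real.sqrt (p / K ^ (α t)) := by
    intro t
    induction t with
    | zero =>
      intro _
      have h := he0
      nlinarith [Real.sqrt_nonneg (p / K ^ (α 0))]
    | succ n ih =>
      intro hn
      have hn' : n ≤ T := Nat.le_of_succ_le hn
      have h1 : e n ≤ 2 * c * Real.sqrt (p / K ^ (α n)) := ih hn'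
      have hrec' := hrec (n+1) (by omega) hn
      have hcond' := hcond (n+1) (by omega) hn
      simp only [Nat.add_sub_cancel] at hrec' hcond'
      set A := K ^ (α n) with hA
      set B := K ^ (α (n+1)) with hB
      have hApos : 0 < A := Real.rpow_pos_of_pos hK0 _
      have hBpos : 0 < B := Real.rpow_pos_of_pos hK0 _
      have hA2 : K ^ (2 * α n) = A ^ 2 := by
        rw [two_mul, Real.rpow_add hK0, sq]
      rw [hA2] at hcond'
      rw [div_le_iff₀ (by positivity)] at hcond'
      -- hcond' : p * B ≤ (1/(4*c^2))^2 * A^2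
      have hc0 : (0:ℝ) < c := by linarith
      have hsqY : Real.sqrt (p / A) ^ 2 = p / A :=
        Real.sq_sqrt (by positivity)
      have hen2 : e n ^ 2 ≤ 4 * c ^ 2 * (p / A) := by
        nlinarith [he n, Real.sqrt_nonneg (p / A)]
      have hkey : 4 * c ^ 2 * (p / A) ≤ Real.sqrt (p / B) := by
        rw [show (4 : ℝ) * c ^ 2 * (p / A) = (4 * c ^ 2 * p) / A by ring]
        rw [Real.le_sqrt (by positivity) (by positivity)]
        rw [div_pow, div_le_div_iff₀ (by positivity) hBpos]
        have e1 : (16:ℝ)*c^4*((1/(4*c^2))^2 * A^2) = A^2 := by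
          field_simp; ring
        have hcond'' : 16 * c^4 * (p*B) ≤ A^2 := by
          have h2 := mul_le_mul_of_nonneg_left hcond'
            (show (0:ℝ) ≤ 16*c^4 by positivity)
          linarith [e1 ▸ h2]
        nlinarith [mul_le_mul_of_nonneg_left hcond'' hp.le]
      calc e (n+1) ≤ c * (e n ^ 2 + Real.sqrt (p / B)) := hrec'
        _ ≤ c * (Real.sqrt (p / B) + Real.sqrt (p / B)) := by
            nlinarith [hen2, hkey]
        _ = 2 * c * Real.sqrt (p / B) := by ring
  have h := key T le_rfl
  rw [hαT, Real.rpow_one] at h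
  exact h
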